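/- Let A be an m×n real matrix, 1 ≤ k ≤ rank(A), and let A_k be the best rank-k approximation of A with pseudoinverse A_k⁺. Let Ã_k be any m×n matrix and suppose ‖(I − A_k Ã_k⁺) A_k‖_2 = ε ‖A_k‖_2 for some ε > 0. Then there exists b ∈ R^m such that, with x_k = A_k⁺ b and x̃_k = Ã_k⁺ b, one has ‖A x_k − b‖_2 = 0 and ‖A x̃_k − b‖_2 ≥ ε ‖b‖_2. In particular, no multiplicative approximation bound is possible for regression through an approximation Ã_k constructed obliviously to b, and the additive error is at least ε‖b‖_2. -/

import Mathlib

open Matrix MeasureTheory ProbabilityTheory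
open scoped Matrix.Norms.L2Operator

noncomputable section

/-- Euclidean (ℓ²) norm of a vector. -/
def vnorm {m : ℕ} (x : Fin m → ℝ) : ℝ := ‖(WithLp.equiv 2 (Fin m → ℝ)).symm x‖

/-- Helper restoring the removed Mathlib lemma: `Aᵀ * A` is Hermitian for a real matrix `A`. -/
theorem Matrix.isHermitian_transpose_mul_self {m n : ℕ} (A : Matrix (Fin m) (Fin n) ℝ) :
    (Aᵀ * A).IsHermitian := by
  simpa [Matrix.conjTranspose_eq_transpose_of_trivial] using
    Matrix.isHermitian_conjTranspose_mul_self A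

/-- `sval M i` is the `i`-th largest singular value of `M` (0-indexed), i.e. the square root of
the `i`-th largest eigenvalue of `MᵀM`. -/
def sval {m n : ℕ} (M : Matrix (Fin m) (Fin n) ℝ) (i : Fin n) : ℝ :=
  Real.sqrt ((Matrix.isHermitian_transpose_mul_self M).eigenvalues
    (Tuple.sort (Matrix.isHermitian_transpose_mul_self M).eigenvalues i.rev))

/-- `P` is the Moore–Penrose pseudoinverse of `M` (the four Penrose conditions). -/
def IsMoorePenrose {m n : ℕ} (M : Matrix (Fin m) (Fin n) ℝ)
    (P : Matrix (Fin n) (Fin m) ℝ) : Prop :=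
  M * P * M = M ∧ P * M * P = P ∧ (M * P)ᵀ = M * P ∧ (P * M)ᵀ = P * M

/-- Column space of a matrix: the span of its columns. -/
def colSpace {m n : ℕ} (M : Matrix (Fin m) (Fin n) ℝ) : Submodule ℝ (Fin m → ℝ) :=
  Submodule.span ℝ (Set.range Mᵀ)

lemma exists_opNorm_attained {E F : Type*} [NormedAddCommGroup E] [NormedSpace ℝ E]
    [FiniteDimensional ℝ E] [Nontrivial E] [NormedAddCommGroup F] [NormedSpace ℝ F]
    (L : E →L[ℝ] F) : ∃ y : E, ‖y‖ = 1 ∧ ‖L y‖ = ‖L‖ := by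
  obtain ⟨y, hy, hmax⟩ := (isCompact_sphere (0:E) 1).exists_isMaxOn
    (NormedSpace.sphere_nonempty.mpr one_pos.le)
    ((L.continuous.norm).continuousOn)
  have hy1 : ‖y‖ = 1 := mem_sphere_zero_iff_norm.mp hy
  refine ⟨y, hy1, le_antisymm ?_ ?_⟩
  · calc ‖L y‖ ≤ ‖L‖ * ‖y‖ := L.le_opNorm y
    _ = ‖L‖ := by rw [hy1, mul_one]
  · refine L.opNorm_le_bound (norm_nonneg _) (fun x => ?_)
    rcases eq_or_ne x 0 with rfl | hx
    · simp
    · have hxn : ‖x‖ ≠ 0 := norm_ne_zero_iff.mpr hx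
      have hu : (‖x‖⁻¹ • x) ∈ Metric.sphere (0:E) 1 := by
        simp [norm_smul, abs_of_nonneg (inv_nonneg.mpr (norm_nonneg x)),
          inv_mul_cancel₀ hxn]
      have h2 : ‖L (‖x‖⁻¹ • x)‖ ≤ ‖L y‖ := hmax hu
      rw [_root_.map_smul, norm_smul, norm_inv, norm_norm] at h2
      calc ‖L x‖ = ‖x‖ * (‖x‖⁻¹ * ‖L x‖) := by field_simp
      _ ≤ ‖x‖ * ‖L y‖ := by
          exact mul_le_mul_of_nonneg_left h2 (norm_nonneg x)
      _ = ‖L y‖ * ‖x‖ := mul_comm _ _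

section matlemmas
variable {m n ρ k : ℕ} (hkρ : k ≤ ρ)

lemma mul_subE (M : Matrix (Fin m) (Fin ρ) ℝ) :
    M * (1 : Matrix (Fin ρ) (Fin ρ) ℝ).submatrix id (Fin.castLE hkρ)
      = M.submatrix id (Fin.castLE hkρ) := by
  ext i j
  simp [Matrix.mul_apply, Matrix.one_apply]

lemma tmul_sub (M : Matrix (Fin m) (Fin ρ) ℝ) (N : Matrix (Fin m) (Fin ρ) ℝ) :
    Mᵀ * N.submatrix id (Fin.castLE hkρ) = (Mᵀ * N).submatrix id (Fin.castLE hkρ) := by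
  ext i j
  simp [Matrix.mul_apply]

lemma stmul_sub (M : Matrix (Fin m) (Fin ρ) ℝ) (N : Matrix (Fin m) (Fin ρ) ℝ) :
    (M.submatrix id (Fin.castLE hkρ))ᵀ * N = ((Mᵀ * N).submatrix (Fin.castLE hkρ) id) := by
  ext i j
  simp [Matrix.mul_apply]

lemma diag_subE (σ : Fin ρ → ℝ) :
    Matrix.diagonal σ * (1 : Matrix (Fin ρ) (Fin ρ) ℝ).submatrix id (Fin.castLE hkρ)
      = (1 : Matrix (Fin ρ) (Fin ρ) ℝ).submatrix id (Fin.castLE hkρ)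
        * Matrix.diagonal (fun i : Fin k => σ (Fin.castLE hkρ i)) := by
  ext i j
  by_cases h : i = Fin.castLE hkρ j <;>
    simp [Matrix.diagonal_mul, Matrix.mul_diagonal, Matrix.one_apply, h]

end matlemmas

set_option maxHeartbeats 1000000 in
/-- lower bound: if `‖(I − A_k Ã_k⁺) A_k‖₂ = ε ‖A_k‖₂` with `ε > 0`, then there is
a `b` with `‖A x_k − b‖₂ = 0` and `‖A x̃_k − b‖₂ ≥ ε ‖b‖₂`, where `x_k = A_k⁺ b` and
`x̃_k = Ã_k⁺ b`.  In particular no multiplicative bound is possible and the additive error is at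
least `ε ‖b‖₂`. -/
theorem stmt_1 (m n ρ k : ℕ) (hk0 : 1 ≤ k) (hkρ : k ≤ ρ)
    (A : Matrix (Fin m) (Fin n) ℝ)
    (U : Matrix (Fin m) (Fin ρ) ℝ) (V : Matrix (Fin n) (Fin ρ) ℝ) (σ : Fin ρ → ℝ)
    (hU : Uᵀ * U = 1) (hV : Vᵀ * V = 1)
    (hσpos : ∀ i, 0 < σ i) (hσmono : ∀ i j : Fin ρ, i ≤ j → σ j ≤ σ i)
    (hA : A = U * Matrix.diagonal σ * Vᵀ) (hrank : A.rank = ρ)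
    (Ak : Matrix (Fin m) (Fin n) ℝ)
    (hAk : Ak = U.submatrix id (Fin.castLE hkρ) *
      Matrix.diagonal (fun i : Fin k => σ (Fin.castLE hkρ i)) *
      (V.submatrix id (Fin.castLE hkρ))ᵀ)
    (Akp : Matrix (Fin n) (Fin m) ℝ)
    (hAkp : Akp = V.submatrix id (Fin.castLE hkρ) *
      Matrix.diagonal (fun i : Fin k => (σ (Fin.castLE hkρ i))⁻¹) *
      (U.submatrix id (Fin.castLE hkρ))ᵀ)
    (At : Matrix (Fin m) (Fin n) ℝ) (Atp : Matrix (Fin n) (Fin m) ℝ)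
    (hAtp : IsMoorePenrose At Atp)
    (ε : ℝ) (hε : 0 < ε)
    (hyp : ‖(1 - Ak * Atp) * Ak‖ = ε * ‖Ak‖) :
    ∃ b : Fin m → ℝ,
      vnorm (A.mulVec (Akp.mulVec b) - b) = 0 ∧
      ε * vnorm b ≤ vnorm (A.mulVec (Atp.mulVec b) - b) := by
  -- abbreviations
  set c := Fin.castLE hkρ with hc
  set Uk := U.submatrix id c with hUkdef
  set Vk := V.submatrix id c with hVkdef
  set D := Matrix.diagonal σ with hD
  set Dk := Matrix.diagonal (fun i : Fin k => σ (c i)) with hDk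
  set Dki := Matrix.diagonal (fun i : Fin k => (σ (c i))⁻¹) with hDki
  set E := (1 : Matrix (Fin ρ) (Fin ρ) ℝ).submatrix id c with hE
  -- basic matrix identities
  have hVE : Vᵀ * Vk = E := by rw [hVkdef, tmul_sub, hV]
  have hUE : U * E = Uk := by rw [hE, mul_subE]
  have hVE' : V * E = Vk := by rw [hE, mul_subE]
  have hUkU : Ukᵀ * U = Eᵀ := by
    rw [hUkdef, stmul_sub, hU, hE]
    ext i j
    simp [Matrix.one_apply, eq_comm]
    rfl
  have hUkUk : Ukᵀ * Uk = 1 := by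
    have h1 : Ukᵀ * Uk = (Uᵀ * U).submatrix c c := by
      ext i j; simp [hUkdef, Matrix.mul_apply]
    rw [h1, hU]
    ext i j
    simp [Matrix.one_apply, (Fin.castLE_injective hkρ).eq_iff]
    exact if_congr ((Fin.castLE_injective hkρ).eq_iff) rfl rfl
  have hDE : D * E = E * Dk := by rw [hD, hDk, diag_subE]
  have hdinv : Dk * Dki = 1 := by
    rw [hDk, hDki, Matrix.diagonal_mul_diagonal]
    have : (fun i : Fin k => σ (c i) * (σ (c i))⁻¹) = fun _ => (1:ℝ) :=
      funext fun i => mul_inv_cancel₀ (hσpos (c i)).ne'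
    rw [this, Matrix.diagonal_one]
  -- key identity 1 : A * Akp = Uk * Ukᵀ
  have key1 : A * Akp = Uk * Ukᵀ := by
    rw [hA, hAkp]
    simp only [Matrix.mul_assoc]
    rw [show Vᵀ * (Vk * (Dki * Ukᵀ)) = E * (Dki * Ukᵀ) by rw [← Matrix.mul_assoc, hVE]]
    rw [show D * (E * (Dki * Ukᵀ)) = E * (Dk * (Dki * Ukᵀ)) by
      rw [← Matrix.mul_assoc, hDE, Matrix.mul_assoc]]
    rw [show Dk * (Dki * Ukᵀ) = Ukᵀ by rw [← Matrix.mul_assoc, hdinv, Matrix.one_mul]]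
    rw [← Matrix.mul_assoc, hUE]
  -- key identity 2 : A * Akp * Ak = Ak
  have key2 : A * Akp * Ak = Ak := by
    rw [key1, hAk]
    simp only [Matrix.mul_assoc]
    rw [show Ukᵀ * (Uk * (Dk * Vkᵀ)) = Dk * Vkᵀ by
      rw [← Matrix.mul_assoc, hUkUk, Matrix.one_mul]]
  -- key identity 3 : Akᵀ * (A - Ak) = 0
  have hED : Eᵀ * D = Dk * Eᵀ := by
    have hDT : Dᵀ = D := by rw [hD, Matrix.diagonal_transpose]
    have hDkT : Dkᵀ = Dk := by rw [hDk, Matrix.diagonal_transpose]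
    have h := congrArg Matrix.transpose hDE
    rw [Matrix.transpose_mul, Matrix.transpose_mul, hDT, hDkT] at h
    exact h
  have hUA : Ukᵀ * A = Dk * Vkᵀ := by
    rw [hA]
    simp only [Matrix.mul_assoc]
    rw [← Matrix.mul_assoc Ukᵀ U, hUkU, ← Matrix.mul_assoc, hED, Matrix.mul_assoc]
    rw [show Eᵀ * Vᵀ = Vkᵀ by rw [← Matrix.transpose_mul, hVE']]
  have hUAk : Ukᵀ * Ak = Dk * Vkᵀ := by
    rw [hAk]
    simp only [Matrix.mul_assoc]
    rw [← Matrix.mul_assoc Ukᵀ Uk, hUkUk, Matrix.one_mul]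
  have key3 : Akᵀ * (A - Ak) = 0 := by
    have hT : Akᵀ = Vk * (Dk * Ukᵀ) := by
      rw [hAk]
      simp [Matrix.transpose_mul, Matrix.mul_assoc, hDk]
    rw [hT, Matrix.mul_assoc, Matrix.mul_assoc, Matrix.mul_sub, hUA, hUAk, sub_self,
      Matrix.mul_zero, Matrix.mul_zero]
  -- orthogonality at vector level
  have orth : ∀ (z w : Fin n → ℝ), (Ak *ᵥ z) ⬝ᵥ ((A - Ak) *ᵥ w) = 0 := by
    intro z w
    calc (Ak *ᵥ z) ⬝ᵥ ((A - Ak) *ᵥ w)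
        = ((A - Ak) *ᵥ w) ⬝ᵥ (Ak *ᵥ z) := dotProduct_comm _ _
      _ = (((A - Ak) *ᵥ w) ᵥ* Ak) ⬝ᵥ z := Matrix.dotProduct_mulVec _ _ _
      _ = (Akᵀ *ᵥ ((A - Ak) *ᵥ w)) ⬝ᵥ z := by rw [Matrix.mulVec_transpose]
      _ = ((Akᵀ * (A - Ak)) *ᵥ w) ⬝ᵥ z := by rw [Matrix.mulVec_mulVec]
      _ = 0 := by rw [key3, Matrix.zero_mulVec, zero_dotProduct]
  -- inner product = dot product
  have idot : ∀ a b : Fin m → ℝ,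
      (inner ℝ ((WithLp.equiv 2 (Fin m → ℝ)).symm a) ((WithLp.equiv 2 (Fin m → ℝ)).symm b) : ℝ)
        = a ⬝ᵥ b := by
    intro a b
    simp [PiLp.inner_apply, dotProduct, RCLike.inner_apply]
    exact Finset.sum_congr rfl fun i _ => mul_comm _ _
  -- Pythagoras inequality
  have pyth : ∀ u v : EuclideanSpace ℝ (Fin m), (inner ℝ u v : ℝ) = 0 → ‖v‖ ≤ ‖u + v‖ := by
    intro u v h
    have h2 : ‖v‖^2 ≤ ‖u + v‖^2 := by
      rw [norm_add_sq_real, h]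
      nlinarith [sq_nonneg ‖u‖]
    calc ‖v‖ = Real.sqrt (‖v‖^2) := (Real.sqrt_sq (norm_nonneg _)).symm
      _ ≤ Real.sqrt (‖u + v‖^2) := Real.sqrt_le_sqrt h2
      _ = ‖u + v‖ := Real.sqrt_sq (norm_nonneg _)
  -- nontriviality of the domain
  have hn : 0 < n := by
    rcases Nat.eq_zero_or_pos n with h | h
    · exfalso
      subst h
      have hρ : (0:ℕ) < ρ := lt_of_lt_of_le hk0 hkρ
      have h1 := congrArg (fun M => M ⟨0,hρ⟩ ⟨0,hρ⟩) hV
      simp [Matrix.mul_apply, Matrix.one_apply] at h1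
    · exact h
  haveI : Nonempty (Fin n) := ⟨⟨0, hn⟩⟩
  haveI : Nontrivial (EuclideanSpace ℝ (Fin n)) := by
    refine nontrivial_of_ne ((WithLp.equiv 2 (Fin n → ℝ)).symm 1) 0 ?_
    intro h
    have h1 := congrArg (fun f => WithLp.equiv 2 (Fin n → ℝ) f ⟨0, hn⟩) h
    simp at h1
  -- the matrix M and attainment
  set Mm := (1 - Ak * Atp) * Ak with hMm
  obtain ⟨y, hy1, hyL⟩ := exists_opNorm_attained
    ((Matrix.toEuclideanLin.trans LinearMap.toContinuousLinearMap) Mm)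
  set y' : Fin n → ℝ := WithLp.equiv 2 (Fin n → ℝ) y with hy'
  have hMy : ‖(WithLp.equiv 2 (Fin m → ℝ)).symm (Mm *ᵥ y')‖ = ε * ‖Ak‖ := by
    have hL : ((Matrix.toEuclideanLin.trans LinearMap.toContinuousLinearMap) Mm) y
        = (WithLp.equiv 2 (Fin m → ℝ)).symm (Mm *ᵥ y') := by
      simp [Matrix.toEuclideanLin_apply, hy']
    rw [← hL, hyL, ← Matrix.l2_opNorm_def, hyp]
  refine ⟨Ak *ᵥ y', ?_, ?_⟩
  · have hb1 : A *ᵥ (Akp *ᵥ (Ak *ᵥ y')) = Ak *ᵥ y' := by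
      rw [Matrix.mulVec_mulVec, Matrix.mulVec_mulVec, key2]
    rw [hb1]
    simp [vnorm]
  · -- decomposition
    set w : Fin n → ℝ := (Atp * Ak) *ᵥ y' with hw
    have hdec : A *ᵥ (Atp *ᵥ (Ak *ᵥ y')) - Ak *ᵥ y'
        = (A - Ak) *ᵥ w + (Ak *ᵥ w - Ak *ᵥ y') := by
      rw [hw]
      simp only [Matrix.mulVec_mulVec]
      rw [Matrix.sub_mul, Matrix.sub_mulVec]
      abel
    have hv : Ak *ᵥ w - Ak *ᵥ y' = -(Mm *ᵥ y') := by
      rw [hMm, hw]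
      simp only [Matrix.mulVec_mulVec]
      rw [Matrix.sub_mul, Matrix.one_mul, Matrix.sub_mulVec, neg_sub, ← Matrix.mul_assoc]
    have horth : (inner ℝ ((WithLp.equiv 2 (Fin m → ℝ)).symm ((A - Ak) *ᵥ w))
        ((WithLp.equiv 2 (Fin m → ℝ)).symm (Ak *ᵥ w - Ak *ᵥ y')) : ℝ) = 0 := by
      rw [idot, ← Matrix.mulVec_sub, dotProduct_comm, orth]
    have hge : vnorm (Ak *ᵥ w - Ak *ᵥ y')
        ≤ vnorm (A *ᵥ (Atp *ᵥ (Ak *ᵥ y')) - Ak *ᵥ y') := by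
      rw [hdec]
      unfold vnorm
      rw [show ∀ x y : Fin m → ℝ, (WithLp.equiv 2 (Fin m → ℝ)).symm (x + y) = (WithLp.equiv 2 (Fin m → ℝ)).symm x + (WithLp.equiv 2 (Fin m → ℝ)).symm y from fun _ _ => rfl]
      exact pyth _ _ horth
    have hnb : vnorm (Ak *ᵥ y') ≤ ‖Ak‖ := by
      have h1 := Matrix.l2_opNorm_mulVec Ak y
      rw [hy1, mul_one] at h1
      exact h1
    have hεb : ε * vnorm (Ak *ᵥ y') ≤ ε * ‖Ak‖ :=
      mul_le_mul_of_nonneg_left hnb hε.le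
    calc ε * vnorm (Ak *ᵥ y') ≤ ε * ‖Ak‖ := hεb
      _ = vnorm (Ak *ᵥ w - Ak *ᵥ y') := by
          rw [hv]
          unfold vnorm
          rw [show ∀ x : Fin m → ℝ, (WithLp.equiv 2 (Fin m → ℝ)).symm (-x) = -(WithLp.equiv 2 (Fin m → ℝ)).symm x from fun _ => rfl, norm_neg, hMy]
      _ ≤ _ := hge


end
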